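/- Let Σ be a finite nonempty alphabet, n a positive integer, P ⊆ (Fin n → Σ) a nonempty property, and U : Fin n → Σ. Let V ∈ P be a closest element of P to U, i.e. d(U,V) = d(U,P), and let D = {j : U j ≠ V j}. Then for every subset A ⊆ D, the input U_A satisfies d(U_A, P) = |A|/n. -/

import Mathlib

open scoped Classical

/-- A deterministic adaptive `q`-query strategy over inputs `Fin n → Γ`. -/
structure Strategy (Γ : Type*) (n q : ℕ) where
  query : (i : Fin q) → (Fin i → Γ) → Fin n
  decide : (Fin q → Γ) → Bool

/-- The answers obtained by running a strategy on input `X`. -/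
noncomputable def Strategy.answers {Γ : Type*} {n q : ℕ}
    (S : Strategy Γ n q) (X : Fin n → Γ) (i : Fin q) : Γ :=
  X (S.query i (fun j => Strategy.answers S X ⟨j.val, j.isLt.trans i.isLt⟩))
termination_by i.val

/-- A strategy accepts `X` iff its decision on the answers is `true`. -/
def Strategy.accepts {Γ : Type*} {n q : ℕ} (S : Strategy Γ n q) (X : Fin n → Γ) : Prop :=
  S.decide (S.answers X) = true

/-- Acceptance probability of an adaptive randomized algorithm (a PMF over strategies). -/
noncomputable def acceptProb {Γ : Type*} {n q : ℕ}
    (μ : PMF (Strategy Γ n q)) (X : Fin n → Γ) : ℝ :=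
  (∑' S : Strategy Γ n q, if S.accepts X then μ S else 0).toReal

/-- Normalized Hamming distance. -/
noncomputable def hdist {Γ : Type*} {n : ℕ} (X Y : Fin n → Γ) : ℝ :=
  (Finset.univ.filter fun j => X j ≠ Y j).card / n

/-- Distance from an input to a property. -/
noncomputable def distSet {Γ : Type*} {n : ℕ} (X : Fin n → Γ) (P : Set (Fin n → Γ)) : ℝ :=
  sInf ((fun Y => hdist X Y) '' P)

/-- `μ` is an `ε`-test for `P`. -/
def IsTest {Γ : Type*} {n q : ℕ} (μ : PMF (Strategy Γ n q))
    (P : Set (Fin n → Γ)) (ε : ℝ) : Prop :=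
  (∀ X ∈ P, 2/3 ≤ acceptProb μ X) ∧
  (∀ X : Fin n → Γ, ε ≤ distSet X P → acceptProb μ X ≤ 1/3)

/-- The set of indices where `U` and `V` differ. -/
noncomputable def diffSet {Γ : Type*} {n : ℕ} (U V : Fin n → Γ) : Finset (Fin n) :=
  Finset.univ.filter fun j => U j ≠ V j

/-- `patch U V A` takes the values of `U` on `A` and of `V` elsewhere. -/
def patch {Γ : Type*} {n : ℕ} (U V : Fin n → Γ) (A : Finset (Fin n)) : Fin n → Γ :=
  fun j => if j ∈ A then U j else V j

/-- `μ` is a `(U,V,l)`-distinguisher. -/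
def IsDistinguisher {Γ : Type*} {n q : ℕ} (μ : PMF (Strategy Γ n q))
    (U V : Fin n → Γ) (l : ℕ) : Prop :=
  2/3 ≤ acceptProb μ V ∧
  ∀ A : Finset (Fin n), A ⊆ diffSet U V → A.card = l →
    acceptProb μ (patch U V A) ≤ 1/3

/-- A non-adaptive randomized `q`-query algorithm is a PMF over pairs
(query positions, decision function). -/
abbrev NAStrategy (Γ : Type*) (n q : ℕ) := (Fin q → Fin n) × ((Fin q → Γ) → Bool)

/-- Acceptance probability of a non-adaptive randomized algorithm. -/
noncomputable def naAcceptProb {Γ : Type*} {n q : ℕ}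
    (μ : PMF (NAStrategy Γ n q)) (X : Fin n → Γ) : ℝ :=
  (∑' p : NAStrategy Γ n q, if p.2 (fun i => X (p.1 i)) = true then μ p else 0).toReal

/-- `μ` (non-adaptive) is a `(U,V,l)`-distinguisher. -/
def NAIsDistinguisher {Γ : Type*} {n q : ℕ} (μ : PMF (NAStrategy Γ n q))
    (U V : Fin n → Γ) (l : ℕ) : Prop :=
  2/3 ≤ naAcceptProb μ V ∧
  ∀ A : Finset (Fin n), A ⊆ diffSet U V → A.card = l →
    naAcceptProb μ (patch U V A) ≤ 1/3

/-- Probability that index `j` appears among the query positions of a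
non-adaptive algorithm. -/
noncomputable def queryProb {Γ : Type*} {n q : ℕ}
    (μ : PMF (NAStrategy Γ n q)) (j : Fin n) : ℝ :=
  (∑' p : NAStrategy Γ n q, if ∃ i : Fin q, p.1 i = j then μ p else 0).toReal

lemma hdist_triangle' {Γ : Type*} {n : ℕ} (X Y Z : Fin n → Γ) :
    hdist X Z ≤ hdist X Y + hdist Y Z := by
  unfold hdist
  rw [← add_div]
  rcases Nat.eq_zero_or_pos n with h | h
  · subst h; simp
  · rw [div_le_div_iff_of_pos_right (by exact_mod_cast h : (0:ℝ) < n)]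
    have hsub : (Finset.univ.filter fun j => X j ≠ Z j) ⊆
        (Finset.univ.filter fun j => X j ≠ Y j) ∪ (Finset.univ.filter fun j => Y j ≠ Z j) := by
      intro j hj
      simp only [Finset.mem_filter, Finset.mem_union, Finset.mem_univ, true_and] at *
      by_contra hc
      push_neg at hc
      exact hj (hc.1.trans hc.2)
    calc ((Finset.univ.filter fun j => X j ≠ Z j).card : ℝ)
        ≤ ((Finset.univ.filter fun j => X j ≠ Y j) ∪ (Finset.univ.filter fun j => Y j ≠ Z j)).card := by
          exact_mod_cast Finset.card_le_card hsub
      _ ≤ _ := by exact_mod_cast Finset.card_union_le _ _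

/-- **Lemma 6 (graded distances).** If `V ∈ P` is a closest element of `P` to `U` and
`D` is the set of indices where `U` and `V` differ, then for every `A ⊆ D` the patched
input `U_A` satisfies `d(U_A, P) = |A|/n`. -/
theorem dist_patch_eq_card_div {Γ : Type*} [Fintype Γ] [Nonempty Γ] {n : ℕ} (hn : 0 < n)
    (P : Set (Fin n → Γ)) (hP : P.Nonempty)
    (U V : Fin n → Γ) (hV : V ∈ P) (hclosest : hdist U V = distSet U P)
    (A : Finset (Fin n)) (hA : A ⊆ diffSet U V) :
    distSet (patch U V A) P = (A.card : ℝ) / n := by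
  have hnR : (0:ℝ) < n := by exact_mod_cast hn
  -- hdist (patch U V A) V = |A|/n
  have h1 : hdist (patch U V A) V = (A.card : ℝ) / n := by
    unfold hdist
    have : (Finset.univ.filter fun j => patch U V A j ≠ V j) = A := by
      ext j
      simp only [Finset.mem_filter, Finset.mem_univ, true_and, patch]
      constructor
      · intro hj
        by_contra h
        simp [h] at hj
      · intro hj
        have := hA hj
        simp only [diffSet, Finset.mem_filter, Finset.mem_univ, true_and] at this
        simpa [hj] using this
    rw [this]
  -- hdist U (patch U V A) = (|D| - |A|)/n
  have h2 : hdist U (patch U V A) = ((diffSet U V).card - A.card : ℝ) / n := by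
    unfold hdist
    have : (Finset.univ.filter fun j => U j ≠ patch U V A j) = diffSet U V \ A := by
      ext j
      simp only [Finset.mem_filter, Finset.mem_univ, true_and, Finset.mem_sdiff, diffSet, patch]
      rcases Classical.em (j ∈ A) with h | h <;> simp [h]
    rw [this, Finset.card_sdiff_of_subset hA]
    congr 1
    rw [Nat.cast_sub (Finset.card_le_card hA)]
  have hUV : hdist U V = ((diffSet U V).card : ℝ) / n := rfl
  -- lower bound for all Y ∈ P
  have hlb : ∀ Y ∈ P, (A.card : ℝ) / n ≤ hdist (patch U V A) Y := by
    intro Y hY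
    have hUY : hdist U V ≤ hdist U Y := by
      rw [hclosest]
      apply csInf_le
      · exact ⟨0, by rintro x ⟨Z, -, rfl⟩; unfold hdist; positivity⟩
      · exact ⟨Y, hY, rfl⟩
    have htri := hdist_triangle' U (patch U V A) Y
    have : hdist U V - hdist U (patch U V A) ≤ hdist (patch U V A) Y := by linarith
    rw [hUV, h2] at this
    calc (A.card : ℝ) / n
        = ((diffSet U V).card : ℝ)/n - ((diffSet U V).card - A.card : ℝ)/n := by ring
      _ ≤ _ := by rw [div_sub_div_same] at this ⊢; linarith
  apply le_antisymm
  · calc distSet (patch U V A) P ≤ hdist (patch U V A) V := by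
          refine csInf_le ⟨0, ?_⟩ ⟨V, hV, rfl⟩
          rintro x ⟨Z, -, rfl⟩
          unfold hdist
          positivity
      _ = _ := h1
  · apply le_csInf (hP.image _)
    rintro x ⟨Y, hY, rfl⟩
    exact hlb Y hY
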